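/- The pair A = 0, B = −(1 + d₀ + d_∞)(2 + d₀ + d_∞) solves the linear system A·α₁ + B·α₀ = −2β₀ and A·α₂ + B·α₁ = −2β₁. -/

import Mathlib

private lemma psh (n : ℕ) (x : ℝ) : (n:ℝ) * (x * x^(n-1)) = (n:ℝ) * x^n := by
  cases n with
  | zero => simp
  | succ m => rw [Nat.add_sub_cancel, ← pow_succ']

/-- in the limit `x_a → 0`, the pair `A = 0`,
`B = -(1 + d₀ + d_∞)(2 + d₀ + d_∞)` solves the linear system. -/
theorem stmt4 (d₀ d₁ : ℕ)
    (p : ℝ → ℝ) (hp : ∀ t, p t = (1 + t) ^ d₀ * (1 - t) ^ d₁)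
    (α : ℕ → ℝ) (hα : ∀ r, α r = ∫ t in (-1:ℝ)..1, p t * t ^ r)
    (β : ℕ → ℝ)
    (hβ : ∀ r, β r = p 1 + (-1:ℝ) ^ r * p (-1) +
      ∫ t in (-1:ℝ)..1, ((d₀ : ℝ) * ((d₀ : ℝ) + 1) * (1 + t) ^ (d₀ - 1) * (1 - t) ^ d₁
        + (d₁ : ℝ) * ((d₁ : ℝ) + 1) * (1 + t) ^ d₀ * (1 - t) ^ (d₁ - 1)) * t ^ r) :
    (0:ℝ) * α 1 + (-((1 + (d₀:ℝ) + (d₁:ℝ)) * (2 + (d₀:ℝ) + (d₁:ℝ)))) * α 0 = -2 * β 0 ∧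
    (0:ℝ) * α 2 + (-((1 + (d₀:ℝ) + (d₁:ℝ)) * (2 + (d₀:ℝ) + (d₁:ℝ)))) * α 1 = -2 * β 1 := by
  have hu : ∀ t : ℝ, HasDerivAt (fun t : ℝ => (1+t)^d₀) ((d₀:ℝ)*(1+t)^(d₀-1)) t := fun t => by
    simpa using ((hasDerivAt_id t).const_add 1).fun_pow d₀
  have hv : ∀ t : ℝ, HasDerivAt (fun t : ℝ => (1-t)^d₁) (-((d₁:ℝ)*(1-t)^(d₁-1))) t := fun t => by
    simpa using ((hasDerivAt_id t).const_sub 1).fun_pow d₁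
  -- the case r = 0
  have H0 : (1 + (d₀:ℝ) + (d₁:ℝ)) * (2 + (d₀:ℝ) + (d₁:ℝ)) *
        (∫ t in (-1:ℝ)..1, (1 + t) ^ d₀ * (1 - t) ^ d₁)
      - 2 * (∫ t in (-1:ℝ)..1, ((d₀ : ℝ) * ((d₀ : ℝ) + 1) * (1 + t) ^ (d₀ - 1) * (1 - t) ^ d₁
        + (d₁ : ℝ) * ((d₁ : ℝ) + 1) * (1 + t) ^ d₀ * (1 - t) ^ (d₁ - 1)))
      = 2 * ((1 + (1:ℝ)) ^ d₀ * (1 - (1:ℝ)) ^ d₁)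
        + 2 * ((1 + (-1:ℝ)) ^ d₀ * (1 - (-1:ℝ)) ^ d₁) := by
    have hF : ∀ t : ℝ,
        HasDerivAt (fun t : ℝ => (1+t)^d₀*(1-t)^d₁*(((d₁:ℝ)-(d₀:ℝ)) + ((2:ℝ)+(d₀:ℝ)+(d₁:ℝ))*t))
        ((1 + (d₀:ℝ) + (d₁:ℝ)) * (2 + (d₀:ℝ) + (d₁:ℝ)) * ((1+t)^d₀*(1-t)^d₁)
          - 2*((d₀:ℝ)*((d₀:ℝ)+1)*(1+t)^(d₀-1)*(1-t)^d₁
            + (d₁:ℝ)*((d₁:ℝ)+1)*(1+t)^d₀*(1-t)^(d₁-1))) t := by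
      intro t
      have hq : HasDerivAt (fun t : ℝ => ((d₁:ℝ)-(d₀:ℝ)) + ((2:ℝ)+(d₀:ℝ)+(d₁:ℝ))*t)
          ((2:ℝ)+(d₀:ℝ)+(d₁:ℝ)) t := by
        simpa using ((hasDerivAt_id t).const_mul ((2:ℝ)+(d₀:ℝ)+(d₁:ℝ))).const_add ((d₁:ℝ)-(d₀:ℝ))
      have h := ((hu t).mul (hv t)).mul hq
      refine h.congr_deriv (Eq.symm ?_)
      simp only [Pi.mul_apply]
      have k1 := psh d₀ (1+t)
      have k2 := psh d₁ (1-t)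
      linear_combination (-(((2:ℝ)+(d₀:ℝ)+(d₁:ℝ))*(1-t)^d₁)) * k1
        + (-(((2:ℝ)+(d₀:ℝ)+(d₁:ℝ))*(1+t)^d₀)) * k2
    have hint : IntervalIntegrable (fun t : ℝ =>
        (1 + (d₀:ℝ) + (d₁:ℝ)) * (2 + (d₀:ℝ) + (d₁:ℝ)) * ((1+t)^d₀*(1-t)^d₁)
          - 2*((d₀:ℝ)*((d₀:ℝ)+1)*(1+t)^(d₀-1)*(1-t)^d₁
            + (d₁:ℝ)*((d₁:ℝ)+1)*(1+t)^d₀*(1-t)^(d₁-1)))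
        MeasureTheory.volume (-1) 1 := by
      apply Continuous.intervalIntegrable; fun_prop
    have hcalc := intervalIntegral.integral_eq_sub_of_hasDerivAt (fun t _ => hF t) hint
    rw [intervalIntegral.integral_sub
        (by apply Continuous.intervalIntegrable; fun_prop)
        (by apply Continuous.intervalIntegrable; fun_prop),
      intervalIntegral.integral_const_mul, intervalIntegral.integral_const_mul] at hcalc
    rw [hcalc]
    show (1+(1:ℝ))^d₀*(1-(1:ℝ))^d₁*(((d₁:ℝ)-(d₀:ℝ)) + ((2:ℝ)+(d₀:ℝ)+(d₁:ℝ))*1)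
        - (1+(-1:ℝ))^d₀*(1-(-1:ℝ))^d₁*(((d₁:ℝ)-(d₀:ℝ)) + ((2:ℝ)+(d₀:ℝ)+(d₁:ℝ))*(-1)) = _
    have hb1 : (1-(1:ℝ))^d₁ * (((d₁:ℝ)-(d₀:ℝ)) + ((2:ℝ)+(d₀:ℝ)+(d₁:ℝ))*1)
        = (1-(1:ℝ))^d₁ * 2 := by
      have h0 : (1-(1:ℝ)) = 0 := by norm_num
      rw [h0]
      cases d₁ with
      | zero => push_cast; ring
      | succ m => simp [zero_pow]
    have hb2 : (1+(-1:ℝ))^d₀ * (((d₁:ℝ)-(d₀:ℝ)) + ((2:ℝ)+(d₀:ℝ)+(d₁:ℝ))*(-1))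
        = (1+(-1:ℝ))^d₀ * (-2) := by
      have h0 : (1+(-1:ℝ)) = 0 := by norm_num
      rw [h0]
      cases d₀ with
      | zero => push_cast; ring
      | succ m => simp [zero_pow]
    linear_combination ((1+(1:ℝ))^d₀) * hb1 - ((1-(-1:ℝ))^d₁) * hb2
  -- the case r = 1
  have H1 : (1 + (d₀:ℝ) + (d₁:ℝ)) * (2 + (d₀:ℝ) + (d₁:ℝ)) *
        (∫ t in (-1:ℝ)..1, (1 + t) ^ d₀ * (1 - t) ^ d₁ * t)
      - 2 * (∫ t in (-1:ℝ)..1, ((d₀ : ℝ) * ((d₀ : ℝ) + 1) * (1 + t) ^ (d₀ - 1) * (1 - t) ^ d₁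
        + (d₁ : ℝ) * ((d₁ : ℝ) + 1) * (1 + t) ^ d₀ * (1 - t) ^ (d₁ - 1)) * t)
      = 2 * ((1 + (1:ℝ)) ^ d₀ * (1 - (1:ℝ)) ^ d₁)
        - 2 * ((1 + (-1:ℝ)) ^ d₀ * (1 - (-1:ℝ)) ^ d₁) := by
    have hF : ∀ t : ℝ,
        HasDerivAt (fun t : ℝ =>
          (1+t)^d₀*(1-t)^d₁*(1 + ((d₁:ℝ)-(d₀:ℝ))*t + ((1:ℝ)+(d₀:ℝ)+(d₁:ℝ))*t^2))
        ((1 + (d₀:ℝ) + (d₁:ℝ)) * (2 + (d₀:ℝ) + (d₁:ℝ)) * ((1+t)^d₀*(1-t)^d₁*t)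
          - 2*(((d₀:ℝ)*((d₀:ℝ)+1)*(1+t)^(d₀-1)*(1-t)^d₁
            + (d₁:ℝ)*((d₁:ℝ)+1)*(1+t)^d₀*(1-t)^(d₁-1))*t)) t := by
      intro t
      have hq : HasDerivAt (fun t : ℝ => 1 + ((d₁:ℝ)-(d₀:ℝ))*t + ((1:ℝ)+(d₀:ℝ)+(d₁:ℝ))*t^2)
          (((d₁:ℝ)-(d₀:ℝ)) + ((1:ℝ)+(d₀:ℝ)+(d₁:ℝ))*(2*t)) t := by
        have h1 : HasDerivAt (fun t : ℝ => 1 + ((d₁:ℝ)-(d₀:ℝ))*t) ((d₁:ℝ)-(d₀:ℝ)) t := by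
          simpa using ((hasDerivAt_id t).const_mul ((d₁:ℝ)-(d₀:ℝ))).const_add 1
        have h2 : HasDerivAt (fun t : ℝ => ((1:ℝ)+(d₀:ℝ)+(d₁:ℝ))*t^2)
            (((1:ℝ)+(d₀:ℝ)+(d₁:ℝ))*(2*t)) t := by
          simpa using (hasDerivAt_pow 2 t).const_mul ((1:ℝ)+(d₀:ℝ)+(d₁:ℝ))
        exact h1.add h2
      have h := ((hu t).mul (hv t)).mul hq
      refine h.congr_deriv (Eq.symm ?_)
      simp only [Pi.mul_apply]
      have k1 := psh d₀ (1+t)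
      have k2 := psh d₁ (1-t)
      linear_combination (-((1+((1:ℝ)+(d₀:ℝ)+(d₁:ℝ))*t)*(1-t)^d₁)) * k1
        + (-((((1:ℝ)+(d₀:ℝ)+(d₁:ℝ))*t-1)*(1+t)^d₀)) * k2
    have hint : IntervalIntegrable (fun t : ℝ =>
        (1 + (d₀:ℝ) + (d₁:ℝ)) * (2 + (d₀:ℝ) + (d₁:ℝ)) * ((1+t)^d₀*(1-t)^d₁*t)
          - 2*(((d₀:ℝ)*((d₀:ℝ)+1)*(1+t)^(d₀-1)*(1-t)^d₁
            + (d₁:ℝ)*((d₁:ℝ)+1)*(1+t)^d₀*(1-t)^(d₁-1))*t))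
        MeasureTheory.volume (-1) 1 := by
      apply Continuous.intervalIntegrable; fun_prop
    have hcalc := intervalIntegral.integral_eq_sub_of_hasDerivAt (fun t _ => hF t) hint
    rw [intervalIntegral.integral_sub
        (by apply Continuous.intervalIntegrable; fun_prop)
        (by apply Continuous.intervalIntegrable; fun_prop),
      intervalIntegral.integral_const_mul, intervalIntegral.integral_const_mul] at hcalc
    rw [hcalc]
    show (1+(1:ℝ))^d₀*(1-(1:ℝ))^d₁*(1 + ((d₁:ℝ)-(d₀:ℝ))*1 + ((1:ℝ)+(d₀:ℝ)+(d₁:ℝ))*1^2)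
        - (1+(-1:ℝ))^d₀*(1-(-1:ℝ))^d₁*(1 + ((d₁:ℝ)-(d₀:ℝ))*(-1) + ((1:ℝ)+(d₀:ℝ)+(d₁:ℝ))*(-1)^2)
        = _
    have hb1 : (1-(1:ℝ))^d₁ * (1 + ((d₁:ℝ)-(d₀:ℝ))*1 + ((1:ℝ)+(d₀:ℝ)+(d₁:ℝ))*1^2)
        = (1-(1:ℝ))^d₁ * 2 := by
      have h0 : (1-(1:ℝ)) = 0 := by norm_num
      rw [h0]
      cases d₁ with
      | zero => push_cast; ring
      | succ m => simp [zero_pow]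
    have hb2 : (1+(-1:ℝ))^d₀ * (1 + ((d₁:ℝ)-(d₀:ℝ))*(-1) + ((1:ℝ)+(d₀:ℝ)+(d₁:ℝ))*(-1)^2)
        = (1+(-1:ℝ))^d₀ * 2 := by
      have h0 : (1+(-1:ℝ)) = 0 := by norm_num
      rw [h0]
      cases d₀ with
      | zero => push_cast; ring
      | succ m => simp [zero_pow]
    linear_combination ((1+(1:ℝ))^d₀) * hb1 - ((1-(-1:ℝ))^d₁) * hb2
  constructor
  · simp only [hα, hβ, hp, pow_zero, pow_one, mul_one, one_mul]
    linear_combination -H0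
  · simp only [hα, hβ, hp, pow_zero, pow_one, mul_one, one_mul]
    linear_combination -H1
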